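/- Let χ be an even primitive Dirichlet character modulo q with q > 1. Then q²·L(2,χ)/(2πi·τ(χ)) = πi·L(−1, conj(χ)); equivalently, q²·L(2,χ) = −2π²·τ(χ)·L(−1, conj(χ)). -/

import Mathlib

open Complex
open scoped ZMod

/-- Conjugate Dirichlet character. -/
noncomputable def conjChar {q : ℕ} (χ : DirichletCharacter ℂ q) : DirichletCharacter ℂ q :=
  χ.ringHomComp (starRingEnd ℂ)

/-- Gauss sum τ(χ) = Σ_{n mod q} χ(n) e^{2πin/q}. -/
noncomputable def gauss {q : ℕ} (χ : DirichletCharacter ℂ q) : ℂ :=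
  ∑ n ∈ Finset.range q, χ (n : ZMod q) * Complex.exp (2 * Real.pi * Complex.I * n / q)

lemma conjChar_eq_inv {q : ℕ} (χ : DirichletCharacter ℂ q) : conjChar χ = χ⁻¹ := by
  refine MulChar.ext fun a ↦ ?_
  rw [MulChar.inv_apply_eq_inv']
  have : ‖χ a‖ = 1 := χ.unit_norm_eq_one a
  show (starRingEnd ℂ) (χ a) = _
  rw [← RCLike.inv_eq_conj this]

lemma gauss_eq {q : ℕ} [NeZero q] (χ : DirichletCharacter ℂ q) :
    gauss χ = gaussSum χ ZMod.stdAddChar := by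
  rw [gaussSum, gauss]
  refine Finset.sum_nbij' (fun n ↦ (n : ZMod q)) (fun a ↦ a.val)
    (fun n _ ↦ Finset.mem_univ _)
    (fun a _ ↦ Finset.mem_range.mpr (ZMod.val_lt a))
    (fun n hn ↦ ZMod.val_natCast_of_lt (Finset.mem_range.mp hn))
    (fun a _ ↦ by simp [ZMod.natCast_val, ZMod.cast_id])
    fun n hn ↦ ?_
  congr 1
  rw [ZMod.stdAddChar_apply, ZMod.toCircle_natCast]

lemma GammaR_two : Complex.Gammaℝ 2 = (Real.pi : ℂ)⁻¹ := by
  rw [Complex.Gammaℝ_def]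
  norm_num [Complex.Gamma_one, cpow_neg_one]

lemma GammaR_neg_one : Complex.Gammaℝ (-1) = -2 * (Real.pi : ℂ) := by
  have h := Complex.Gammaℝ_add_two (s := -1) (by norm_num)
  rw [show (-1 : ℂ) + 2 = 1 by ring, Complex.Gammaℝ_one] at h
  have hπ : (Real.pi : ℂ) ≠ 0 := ofReal_ne_zero.mpr Real.pi_ne_zero
  rw [div_div, eq_div_iff (mul_ne_zero two_ne_zero hπ)] at h
  linear_combination h

set_option maxHeartbeats 1000000 in
/-- Let χ be an even primitive Dirichlet character modulo q with q > 1.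
Then q²·L(2,χ)/(2πi·τ(χ)) = πi·L(−1, conj(χ)); equivalently,
q²·L(2,χ) = −2π²·τ(χ)·L(−1, conj(χ)). -/
theorem functional_equation_c1
    (q : ℕ) [NeZero q] (hq : 1 < q)
    (χ : DirichletCharacter ℂ q) (hprim : χ.IsPrimitive) (heven : χ (-1) = 1) :
    (q : ℂ) ^ 2 * χ.LFunction 2 / (2 * (Real.pi : ℂ) * Complex.I * gauss χ)
      = (Real.pi : ℂ) * Complex.I * (conjChar χ).LFunction (-1)
    ∧ (q : ℂ) ^ 2 * χ.LFunction 2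
      = -2 * (Real.pi : ℂ) ^ 2 * gauss χ * (conjChar χ).LFunction (-1) := by
  have hq0 : (q : ℂ) ≠ 0 := Nat.cast_ne_zero.mpr (NeZero.ne q)
  have hπ : (Real.pi : ℂ) ≠ 0 := ofReal_ne_zero.mpr Real.pi_ne_zero
  have hχeven : χ.Even := heven
  have hχ1 : χ ≠ 1 := by
    intro h
    rw [DirichletCharacter.IsPrimitive, h, DirichletCharacter.conductor_one] at hprim
    omega
  have hτ : gauss χ ≠ 0 := by
    rw [gauss_eq]
    intro h0
    have hF : 𝓕 (χ : ZMod q → ℂ) = fun _ ↦ 0 := by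
      funext k
      rw [hprim.fourierTransform_eq_inv_mul_gaussSum, h0, mul_zero]
    have h2 := congrFun (ZMod.dft_dft (χ : ZMod q → ℂ)) (-1)
    rw [hF] at h2
    simp only [ZMod.dft_apply, smul_zero, mul_zero, Finset.sum_const_zero, neg_neg, map_one,
      smul_eq_mul, mul_one] at h2
    exact hq0 h2.symm
  -- functional equation at s = -1
  have key := hprim.completedLFunction_one_sub (-1)
  rw [show (1 : ℂ) - (-1) = 2 by ring] at key
  have hΛ2 : DirichletCharacter.completedLFunction χ 2 = χ.LFunction 2 * (Real.pi : ℂ)⁻¹ := by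
    rw [DirichletCharacter.LFunction_eq_completed_div_gammaFactor χ 2 (Or.inl two_ne_zero),
      hχeven.gammaFactor_def, GammaR_two]
    field_simp
  have hinv_even : (χ⁻¹ : DirichletCharacter ℂ q).Even := by
    show χ⁻¹ (-1) = 1
    rw [MulChar.inv_apply_eq_inv', heven, inv_one]
  have hΛn : DirichletCharacter.completedLFunction (χ⁻¹ : DirichletCharacter ℂ q) (-1)
      = (χ⁻¹ : DirichletCharacter ℂ q).LFunction (-1) * (-2 * (Real.pi : ℂ)) := by
    rw [DirichletCharacter.LFunction_eq_completed_div_gammaFactor _ (-1) (Or.inl (by norm_num)),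
      hinv_even.gammaFactor_def, GammaR_neg_one]
    field_simp
  have hroot : DirichletCharacter.rootNumber χ = gauss χ / (q : ℂ) ^ (1/2 : ℂ) := by
    rw [DirichletCharacter.rootNumber, if_pos hχeven, pow_zero, div_one, gauss_eq]
  have hpow : (q : ℂ) ^ ((-1 : ℂ) - 1/2) / (q : ℂ) ^ (1/2 : ℂ) = ((q : ℂ) ^ 2)⁻¹ := by
    rw [← cpow_sub _ _ hq0, show (-1 : ℂ) - 1/2 - 1/2 = -2 by ring, cpow_neg,
      show (2 : ℂ) = ((2 : ℕ) : ℂ) by norm_num, cpow_natCast]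
  rw [hΛ2, hΛn, hroot] at key
  have key2 : χ.LFunction 2 * (Real.pi : ℂ)⁻¹
      = ((q : ℂ) ^ 2)⁻¹ * gauss χ * ((χ⁻¹ : DirichletCharacter ℂ q).LFunction (-1)
        * (-2 * (Real.pi : ℂ))) := by
    rw [key, ← hpow]; ring
  have hsecond : (q : ℂ) ^ 2 * χ.LFunction 2
      = -2 * (Real.pi : ℂ) ^ 2 * gauss χ * (conjChar χ).LFunction (-1) := by
    rw [conjChar_eq_inv]
    set A := χ.LFunction 2 with hA
    set B := DirichletCharacter.LFunction (χ⁻¹ : DirichletCharacter ℂ q) (-1) with hB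
    have hq2 : ((q : ℂ) ^ 2) ≠ 0 := pow_ne_zero _ hq0
    field_simp at key2
    linear_combination key2
  refine ⟨?_, hsecond⟩
  rw [hsecond]
  have hI : Complex.I ≠ 0 := I_ne_zero
  set B := DirichletCharacter.LFunction (conjChar χ) (-1) with hB
  field_simp
  ring_nf
  rw [I_sq]
  ring
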